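/- arXiv:2101.11799 — 2 statements merged into one kernel-verified Lean document; each statement's English description precedes it below -/
import Mathlib

section
/- Let V be a real inner product space, let B and M be disjoint finite index sets of benign and compromised clients with real weights p, benign local models θ_i ∈ V for i ∈ B and compromised local models θ_i ∈ V for i ∈ M, and let θ* ∈ V be the attacker's target model. Set s = Σ_{i∈M} p_i, P = Σ_{i∈B} p_i + Σ_{i∈M} p_i, and c = (P − s)/s, and assume s ≠ 0. If every compromised client i ∈ M uploads the crafted model θ̂_i = (1/s)·(θ* − c·Σ_{j∈M} p_j θ_j), then the mean-aggregated model satisfies θ̂ = θ* + (Σ_{j∈B} p_j θ_j − c·Σ_{j∈M} p_j θ_j), and hence F_A(θ̂) = ‖Σ_{j∈B} p_j θ_j − c·Σ_{j∈M} p_j θ_j‖². -/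
/-- Theorem 1 (partial knowledge case): under mean aggregation, if every compromised
client uploads `(1/s) • (θ* − c • Σ_{j∈M} p_j θ_j)` with `s = Σ_{i∈M} p_i ≠ 0`,
`P = Σ_{i∈B} p_i + Σ_{i∈M} p_i` and `c = (P − s)/s`, then the aggregated model is
`θ* + (Σ_{j∈B} p_j θ_j − c • Σ_{j∈M} p_j θ_j)` and the attacker's loss equals
`‖Σ_{j∈B} p_j θ_j − c • Σ_{j∈M} p_j θ_j‖²`. -/
theorem cmp_mean_aggregation_partial_knowledge
    {ι V : Type*} [NormedAddCommGroup V] [InnerProductSpace ℝ V]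
    (B M : Finset ι) (hdisj : Disjoint B M)
    (p : ι → ℝ) (θ : ι → V) (θstar : V)
    (s P c : ℝ) (hs : s = ∑ i ∈ M, p i)
    (hP : P = (∑ i ∈ B, p i) + ∑ i ∈ M, p i)
    (hc : c = (P - s) / s) (hsne : s ≠ 0)
    (θhat : ι → V)
    (hcraft : ∀ i ∈ M, θhat i = (1 / s) • (θstar - c • ∑ j ∈ M, p j • θ j))
    (agg : V)
    (hagg : agg = (∑ i ∈ B, p i • θ i) + ∑ i ∈ M, p i • θhat i) :
    agg = θstar + ((∑ j ∈ B, p j • θ j) - c • ∑ j ∈ M, p j • θ j) ∧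
      ‖agg - θstar‖ ^ 2 = ‖(∑ j ∈ B, p j • θ j) - c • ∑ j ∈ M, p j • θ j‖ ^ 2 := by
  have hsum : ∑ i ∈ M, p i • θhat i = θstar - c • ∑ j ∈ M, p j • θ j := by
    have : ∑ i ∈ M, p i • θhat i
        = (∑ i ∈ M, p i) • ((1 / s) • (θstar - c • ∑ j ∈ M, p j • θ j)) := by
      rw [Finset.sum_smul]
      exact Finset.sum_congr rfl fun i hi => by rw [hcraft i hi]
    rw [this, ← hs, smul_smul]
    rw [mul_one_div, div_self hsne, one_smul]
  have h1 : agg = θstar + ((∑ j ∈ B, p j • θ j) - c • ∑ j ∈ M, p j • θ j) := by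
    rw [hagg, hsum]; abel
  exact ⟨h1, by rw [h1]; ring_nf; rw [add_sub_cancel_left]⟩
end

section
/- Let V be a real inner product space. Let B be a finite set of benign clients with models θ_j ∈ V (j ∈ B) and |B| = n − m, and let θ̂_1, …, θ̂_m ∈ V be the crafted compromised models, where n and m are natural numbers with m ≥ 1 and n − 2m − 1 ≥ 0. Assume ‖θ̂_i − θ̂_1‖ ≤ ε for every i ∈ {2, …, m}. Then the Krum score of θ̂_1, namely the minimum over subsets T of {θ̂_2, …, θ̂_m} ∪ {θ_j : j ∈ B} with |T| = n − m − 2 of the sum of the distances from θ̂_1 to the members of T, satisfies: Krum score of θ̂_1 ≤ (m − 1)·ε + min over subsets S' ⊆ B with |S'| = n − 2m − 1 of Σ_{j∈S'} ‖θ_j − θ̂_1‖. -/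
/-- Upper bound on the Krum score of the primary crafted model `θ̂_1`: with `m`
compromised clients (indexed `1, …, m`, primary `θ̂_1`), `|B| = n − m` benign clients,
and the auxiliary crafted models within distance `ε` of `θ̂_1`, the Krum score of
`θ̂_1` (minimum over subsets `T` of the other uploaded models, `|T| = n − m − 2`, of
the sum of distances from `θ̂_1`) is at most
`(m − 1)·ε + min_{S' ⊆ B, |S'| = n − 2m − 1} Σ_{j∈S'} ‖θ_j − θ̂_1‖`. -/
theorem krum_score_crafted_upper_bound
    {ι V : Type*} [DecidableEq ι] [NormedAddCommGroup V] [InnerProductSpace ℝ V]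
    (n m : ℕ) (hm : 1 ≤ m) (hnm : 2 * m + 1 ≤ n)
    (B : Finset ι) (hBcard : B.card = n - m)
    (θ : ι → V) (θhat : ℕ → V) (ε : ℝ)
    (hclose : ∀ i ∈ Finset.Icc 2 m, ‖θhat i - θhat 1‖ ≤ ε) :
    sInf {x : ℝ |
        ∃ T ⊆ (Finset.Icc 2 m).map (Function.Embedding.inl (β := ι)) ∪
            B.map (Function.Embedding.inr (α := ℕ)),
          T.card = n - m - 2 ∧ x = ∑ j ∈ T, ‖θhat 1 - Sum.elim θhat θ j‖} ≤
      ((m : ℝ) - 1) * ε +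
        sInf {x : ℝ | ∃ S ⊆ B, S.card = n - 2 * m - 1 ∧
          x = ∑ j ∈ S, ‖θ j - θhat 1‖} := by
  -- RHS set is nonempty
  obtain ⟨S₀, hS₀sub, hS₀card⟩ := Finset.exists_subset_card_eq (s := B) (n := n - 2 * m - 1)
    (by omega)
  have hne : ({x : ℝ | ∃ S ⊆ B, S.card = n - 2 * m - 1 ∧
      x = ∑ j ∈ S, ‖θ j - θhat 1‖}).Nonempty :=
    ⟨_, S₀, hS₀sub, hS₀card, rfl⟩
  rw [← sub_le_iff_le_add']
  apply le_csInf hne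
  rintro x ⟨S, hSsub, hScard, rfl⟩
  rw [sub_le_iff_le_add']
  -- construct T
  set T := (Finset.Icc 2 m).map (Function.Embedding.inl (β := ι)) ∪
      S.map (Function.Embedding.inr (α := ℕ)) with hT
  have hdisj : Disjoint ((Finset.Icc 2 m).map (Function.Embedding.inl (β := ι)))
      (S.map (Function.Embedding.inr (α := ℕ))) := by
    rw [Finset.disjoint_left]
    rintro a ha hb
    simp only [Finset.mem_map, Function.Embedding.inl_apply,
      Function.Embedding.inr_apply] at ha hb
    obtain ⟨i, _, rfl⟩ := ha
    obtain ⟨j, _, h⟩ := hb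
    exact Sum.inr_ne_inl h
  have hTsub : T ⊆ (Finset.Icc 2 m).map (Function.Embedding.inl (β := ι)) ∪
      B.map (Function.Embedding.inr (α := ℕ)) :=
    Finset.union_subset_union le_rfl (Finset.map_subset_map.mpr hSsub)
  have hTcard : T.card = n - m - 2 := by
    rw [hT, Finset.card_union_of_disjoint hdisj, Finset.card_map, Finset.card_map,
      Nat.card_Icc, hScard]
    omega
  have hmem : (∑ j ∈ T, ‖θhat 1 - Sum.elim θhat θ j‖) ∈ {x : ℝ |
      ∃ T ⊆ (Finset.Icc 2 m).map (Function.Embedding.inl (β := ι)) ∪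
          B.map (Function.Embedding.inr (α := ℕ)),
        T.card = n - m - 2 ∧ x = ∑ j ∈ T, ‖θhat 1 - Sum.elim θhat θ j‖} :=
    ⟨T, hTsub, hTcard, rfl⟩
  have hbdd : BddBelow {x : ℝ |
      ∃ T ⊆ (Finset.Icc 2 m).map (Function.Embedding.inl (β := ι)) ∪
          B.map (Function.Embedding.inr (α := ℕ)),
        T.card = n - m - 2 ∧ x = ∑ j ∈ T, ‖θhat 1 - Sum.elim θhat θ j‖} := by
    refine ⟨0, ?_⟩
    rintro y ⟨T', _, _, rfl⟩
    exact Finset.sum_nonneg fun _ _ => norm_nonneg _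
  refine (csInf_le hbdd hmem).trans ?_
  rw [hT, Finset.sum_union hdisj, Finset.sum_map, Finset.sum_map]
  simp only [Function.Embedding.inl_apply, Function.Embedding.inr_apply,
    Sum.elim_inl, Sum.elim_inr]
  have h1 : ∑ i ∈ Finset.Icc 2 m, ‖θhat 1 - θhat i‖ ≤ ((m : ℝ) - 1) * ε := by
    calc ∑ i ∈ Finset.Icc 2 m, ‖θhat 1 - θhat i‖
        ≤ ∑ _i ∈ Finset.Icc 2 m, ε := by
          refine Finset.sum_le_sum fun i hi => ?_
          rw [norm_sub_rev]; exact hclose i hi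
      _ = ((m + 1 - 2 : ℕ) : ℝ) * ε := by
          rw [Finset.sum_const, Nat.card_Icc, nsmul_eq_mul]
      _ = ((m : ℝ) - 1) * ε := by
          rw [Nat.cast_sub (by omega : 2 ≤ m + 1)]; push_cast; ring
  have h2 : ∑ j ∈ S, ‖θhat 1 - θ j‖ = ∑ j ∈ S, ‖θ j - θhat 1‖ := by
    exact Finset.sum_congr rfl fun j _ => norm_sub_rev _ _
  rw [h2]
  linarith
end
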